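/- For positive integers N = 2^L and K with 1 < K, let L₀ be the largest integer with 2^{L₀} ≤ (1/2)√(N/K). Then Σ_{ℓ=1}^{L} min{√(N/2^ℓ), 2√(2^ℓ K)} ≤ (4√2+4)(NK)^{1/4}. -/

import Mathlib

open Finset

private lemma geo1 (x : ℝ) (hx : 1 < x) (m : ℕ) :
    ∑ ℓ ∈ Finset.Ioc 0 m, x ^ ℓ ≤ x ^ (m + 1) / (x - 1) := by
  have hx1 : 0 < x - 1 := by linarith
  induction m with
  | zero =>
    simp only [Finset.Ioc_self, Finset.sum_empty]
    positivity
  | succ n ih =>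
    rw [Finset.sum_Ioc_succ_top (Nat.zero_le _)]
    have key : x ^ (n + 1) / (x - 1) + x ^ (n + 1) = x ^ (n + 1 + 1) / (x - 1) := by
      field_simp
      ring
    linarith

private lemma geo2 (y : ℝ) (h0 : 0 < y) (h1 : y < 1) (a b : ℕ) :
    ∑ ℓ ∈ Finset.Ioc a b, y ^ ℓ ≤ y ^ (a + 1) / (1 - y) := by
  have h1y : 0 < 1 - y := by linarith
  rcases le_or_gt a b with h | h
  · have hr : ∀ n : ℕ, ∑ ℓ ∈ Finset.range n, y ^ ℓ = (y ^ n - 1) / (y - 1) :=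
      fun n => geom_sum_eq (by linarith) n
    have hc : (∑ ℓ ∈ Finset.Ico 0 (a + 1), y ^ ℓ) + ∑ ℓ ∈ Finset.Ico (a + 1) (b + 1), y ^ ℓ
        = ∑ ℓ ∈ Finset.Ico 0 (b + 1), y ^ ℓ :=
      Finset.sum_Ico_consecutive _ (Nat.zero_le _) (by omega)
    rw [Finset.Ico_add_one_add_one_eq_Ioc] at hc
    simp only [← Nat.Ico_zero_eq_range] at hr
    have key : ∑ ℓ ∈ Finset.Ioc a b, y ^ ℓ
        = (y ^ (b + 1) - 1) / (y - 1) - (y ^ (a + 1) - 1) / (y - 1) := by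
      rw [← hr, ← hr]
      linarith [hc]
    rw [key]
    have heq : (y ^ (b + 1) - 1) / (y - 1) - (y ^ (a + 1) - 1) / (y - 1)
        = (y ^ (a + 1) - y ^ (b + 1)) / (1 - y) := by
      rw [div_sub_div_same]
      rw [div_eq_div_iff (by linarith) (by linarith)]
      ring
    rw [heq]
    apply (div_le_div_iff_of_pos_right h1y).mpr
    nlinarith [pow_pos h0 (b + 1)]
  · rw [Finset.Ioc_eq_empty (by omega)]
    simp only [Finset.sum_empty]
    positivity

private lemma pow4_le {a b : ℝ} (hb : 0 ≤ b) (h : a ^ 4 ≤ b ^ 4) : a ≤ b :=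
  le_of_pow_le_pow_left₀ (by norm_num) hb h

set_option maxHeartbeats 1000000 in
/-- With `N = 2^L` and `K > 1`,
`∑_{ℓ=1}^L min { √(N/2^ℓ), 2√(2^ℓ K) } ≤ (4√2 + 4) (N K)^{1/4}`. -/
theorem stmt8 (L K : ℕ) (hK : 1 < K) :
    ∑ ℓ ∈ Finset.Icc 1 L,
        min (Real.sqrt ((2 : ℝ) ^ L / 2 ^ ℓ)) (2 * Real.sqrt (2 ^ ℓ * K)) ≤
      (4 * Real.sqrt 2 + 4) * ((2 : ℝ) ^ L * K) ^ ((1 : ℝ) / 4) := by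
  set s := Real.sqrt 2 with hs
  have hs2 : s ^ 2 = 2 := Real.sq_sqrt (by norm_num)
  have hsnn : 0 ≤ s := Real.sqrt_nonneg 2
  have hs1 : 1 < s := by nlinarith
  have hs0 : 0 < s := by linarith
  have hs4 : s ^ 4 = 4 := by
    rw [show (4 : ℕ) = 2 * 2 from rfl, pow_mul, hs2]; norm_num
  set A := ((2 : ℝ) ^ L * K) ^ ((1 : ℝ) / 4) with hA
  have hKpos : (0 : ℝ) < K := by positivity
  have hK2 : (2 : ℝ) ≤ K := by exact_mod_cast hK
  have hNpos : (0 : ℝ) < 2 ^ L := by positivity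
  have hA0 : 0 ≤ A := Real.rpow_nonneg (by positivity) _
  have hA4 : A ^ 4 = (2 : ℝ) ^ L * K := by
    rw [hA, ← Real.rpow_natCast _ 4, ← Real.rpow_mul (by positivity)]
    norm_num
  set sK := Real.sqrt K with hsK
  set sN := Real.sqrt ((2 : ℝ) ^ L) with hsN
  have hsK2 : sK ^ 2 = K := Real.sq_sqrt hKpos.le
  have hsN2 : sN ^ 2 = (2 : ℝ) ^ L := Real.sq_sqrt hNpos.le
  have hsK0 : 0 ≤ sK := Real.sqrt_nonneg _
  have hsN0 : 0 ≤ sN := Real.sqrt_nonneg _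
  have hpow : ∀ ℓ : ℕ, Real.sqrt ((2 : ℝ) ^ ℓ) = s ^ ℓ := by
    intro ℓ
    rw [show ((2 : ℝ) ^ ℓ) = (s ^ ℓ) ^ 2 by rw [← pow_mul, mul_comm, pow_mul, hs2]]
    exact Real.sqrt_sq (by positivity)
  -- inverse facts
  have hsi0 : 0 < s⁻¹ := by positivity
  have hsi1 : s⁻¹ < 1 := by
    rw [inv_lt_one_iff₀]; right; exact hs1
  have h1si : 0 < 1 - s⁻¹ := by linarith
  have hinv : (1 - s⁻¹)⁻¹ = 2 + s := by
    apply inv_eq_of_mul_eq_one_right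
    field_simp
    nlinarith
  -- per-term bounds
  have hb : ∀ ℓ : ℕ, min (Real.sqrt ((2 : ℝ) ^ L / 2 ^ ℓ)) (2 * Real.sqrt (2 ^ ℓ * K))
      ≤ 2 * sK * s ^ ℓ := by
    intro ℓ
    refine (min_le_right _ _).trans (le_of_eq ?_)
    rw [Real.sqrt_mul (by positivity), hpow ℓ]
    ring
  have ha : ∀ ℓ : ℕ, min (Real.sqrt ((2 : ℝ) ^ L / 2 ^ ℓ)) (2 * Real.sqrt (2 ^ ℓ * K))
      ≤ sN * (s⁻¹) ^ ℓ := by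
    intro ℓ
    refine (min_le_left _ _).trans (le_of_eq ?_)
    rw [Real.sqrt_div hNpos.le, hpow ℓ, inv_pow, div_eq_mul_inv]
  rw [show Finset.Icc 1 L = Finset.Ioc 0 L from Finset.Icc_add_one_left_eq_Ioc 0 L]
  by_cases h4 : 4 * K ≤ 2 ^ L
  · -- main case: split at m
    set P : ℕ → Prop := fun j => 4 ^ (j + 1) * K ≤ 2 ^ L with hP
    have hP0 : P 0 := by simpa [hP] using h4
    set m := Nat.findGreatest P L with hm
    have hPm : P m := Nat.findGreatest_spec (Nat.zero_le L) hP0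
    have hm1L : m + 1 ≤ L := by
      have h4e : (4 : ℕ) ^ (m + 1) = 2 ^ (2 * (m + 1)) := by
        rw [show (4 : ℕ) = 2 ^ 2 from rfl, ← pow_mul]
      have h2 : 2 ^ (2 * (m + 1) + 1) ≤ 2 ^ L := by
        calc 2 ^ (2 * (m + 1) + 1) = 2 ^ (2 * (m + 1)) * 2 := by rw [pow_succ]
        _ ≤ 4 ^ (m + 1) * K := by rw [h4e]; exact Nat.mul_le_mul_left _ hK
        _ ≤ 2 ^ L := hPm
      have := (Nat.pow_le_pow_iff_right (by norm_num : 1 < 2)).mp h2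
      omega
    have hPnot : ¬ P (m + 1) :=
      Nat.findGreatest_is_greatest (by omega) hm1L
    -- real versions
    have hPmR : (4 : ℝ) ^ (m + 1) * K ≤ 2 ^ L := by exact_mod_cast hPm
    have hPnotR : (2 : ℝ) ^ L < 4 ^ (m + 2) * K := by
      have : 2 ^ L < 4 ^ (m + 1 + 1) * K := by
        simpa [hP] using Nat.lt_of_not_le hPnot
      exact_mod_cast this
    -- key bounds
    have hB1 : s ^ (m + 1) * sK ≤ A := by
      apply pow4_le hA0
      have e1 : (s ^ (m + 1) * sK) ^ 4 = 4 ^ (m + 1) * (K : ℝ) ^ 2 := by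
        rw [mul_pow, ← pow_mul, mul_comm (m + 1) 4, pow_mul, hs4,
          show sK ^ 4 = (sK ^ 2) ^ 2 by ring, hsK2]
      rw [e1, hA4]
      nlinarith
    have hB2 : sN ≤ s ^ (m + 2) * A := by
      apply pow4_le (by positivity)
      have e1 : (s ^ (m + 2) * A) ^ 4 = 4 ^ (m + 2) * ((2 : ℝ) ^ L * K) := by
        rw [mul_pow, ← pow_mul, mul_comm (m + 2) 4, pow_mul, hs4, hA4]
      have e2 : sN ^ 4 = ((2 : ℝ) ^ L) ^ 2 := by
        rw [show sN ^ 4 = (sN ^ 2) ^ 2 by ring, hsN2]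
      rw [e1, e2]
      nlinarith
    have hB2' : sN * (s⁻¹) ^ (m + 1) ≤ s * A := by
      rw [inv_pow, ← div_eq_mul_inv, div_le_iff₀ (by positivity)]
      calc sN ≤ s ^ (m + 2) * A := hB2
      _ = s * A * s ^ (m + 1) := by rw [pow_succ]; ring
    -- split the sum
    have hsplit : (∑ ℓ ∈ Finset.Ioc 0 m,
          min (Real.sqrt ((2 : ℝ) ^ L / 2 ^ ℓ)) (2 * Real.sqrt (2 ^ ℓ * K)))
        + ∑ ℓ ∈ Finset.Ioc m L,
          min (Real.sqrt ((2 : ℝ) ^ L / 2 ^ ℓ)) (2 * Real.sqrt (2 ^ ℓ * K))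
        = ∑ ℓ ∈ Finset.Ioc 0 L,
          min (Real.sqrt ((2 : ℝ) ^ L / 2 ^ ℓ)) (2 * Real.sqrt (2 ^ ℓ * K)) :=
      Finset.sum_Ioc_consecutive _ (Nat.zero_le m) (by omega)
    rw [← hsplit]
    have hSum1 : (∑ ℓ ∈ Finset.Ioc 0 m,
        min (Real.sqrt ((2 : ℝ) ^ L / 2 ^ ℓ)) (2 * Real.sqrt (2 ^ ℓ * K)))
        ≤ (2 * s + 2) * A := by
      calc (∑ ℓ ∈ Finset.Ioc 0 m,
          min (Real.sqrt ((2 : ℝ) ^ L / 2 ^ ℓ)) (2 * Real.sqrt (2 ^ ℓ * K)))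
          ≤ ∑ ℓ ∈ Finset.Ioc 0 m, 2 * sK * s ^ ℓ :=
            Finset.sum_le_sum fun ℓ _ => hb ℓ
      _ = 2 * sK * ∑ ℓ ∈ Finset.Ioc 0 m, s ^ ℓ := by rw [Finset.mul_sum]
      _ ≤ 2 * sK * (s ^ (m + 1) / (s - 1)) := by
          apply mul_le_mul_of_nonneg_left (geo1 s hs1 m) (by positivity)
      _ = 2 * (s + 1) * (s ^ (m + 1) * sK) := by
          have h11 : (s - 1)⁻¹ = s + 1 :=
            inv_eq_of_mul_eq_one_left (by nlinarith)
          rw [div_eq_mul_inv, h11]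
          ring
      _ ≤ 2 * (s + 1) * A := by
          apply mul_le_mul_of_nonneg_left hB1 (by positivity)
      _ = (2 * s + 2) * A := by ring
    have hSum2 : (∑ ℓ ∈ Finset.Ioc m L,
        min (Real.sqrt ((2 : ℝ) ^ L / 2 ^ ℓ)) (2 * Real.sqrt (2 ^ ℓ * K)))
        ≤ (2 * s + 2) * A := by
      calc (∑ ℓ ∈ Finset.Ioc m L,
          min (Real.sqrt ((2 : ℝ) ^ L / 2 ^ ℓ)) (2 * Real.sqrt (2 ^ ℓ * K)))
          ≤ ∑ ℓ ∈ Finset.Ioc m L, sN * (s⁻¹) ^ ℓ :=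
            Finset.sum_le_sum fun ℓ _ => ha ℓ
      _ = sN * ∑ ℓ ∈ Finset.Ioc m L, (s⁻¹) ^ ℓ := by rw [Finset.mul_sum]
      _ ≤ sN * ((s⁻¹) ^ (m + 1) / (1 - s⁻¹)) :=
          mul_le_mul_of_nonneg_left (geo2 s⁻¹ hsi0 hsi1 m L) hsN0
      _ = (sN * (s⁻¹) ^ (m + 1)) * (2 + s) := by
          rw [div_eq_mul_inv, hinv]; ring
      _ ≤ (s * A) * (2 + s) := by
          apply mul_le_mul_of_nonneg_right hB2' (by linarith)
      _ = (2 * s + s ^ 2) * A := by ring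
      _ = (2 * s + 2) * A := by rw [hs2]
    linarith
  · -- small case: N < 4K, bound everything by the a-terms
    have h4R : (2 : ℝ) ^ L < 4 * K := by exact_mod_cast Nat.lt_of_not_le h4
    have hB3 : sN ≤ 2 * A := by
      apply pow4_le (by positivity)
      have e2 : sN ^ 4 = ((2 : ℝ) ^ L) ^ 2 := by
        rw [show sN ^ 4 = (sN ^ 2) ^ 2 by ring, hsN2]
      rw [e2, show (2 * A) ^ 4 = 16 * A ^ 4 by ring, hA4]
      nlinarith
    calc (∑ ℓ ∈ Finset.Ioc 0 L,
        min (Real.sqrt ((2 : ℝ) ^ L / 2 ^ ℓ)) (2 * Real.sqrt (2 ^ ℓ * K)))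
        ≤ ∑ ℓ ∈ Finset.Ioc 0 L, sN * (s⁻¹) ^ ℓ :=
          Finset.sum_le_sum fun ℓ _ => ha ℓ
    _ = sN * ∑ ℓ ∈ Finset.Ioc 0 L, (s⁻¹) ^ ℓ := by rw [Finset.mul_sum]
    _ ≤ sN * ((s⁻¹) ^ (0 + 1) / (1 - s⁻¹)) :=
        mul_le_mul_of_nonneg_left (geo2 s⁻¹ hsi0 hsi1 0 L) hsN0
    _ = (sN * s⁻¹) * (2 + s) := by
        rw [div_eq_mul_inv, hinv]; ring
    _ ≤ sN * (2 + s) := by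
        have : sN * s⁻¹ ≤ sN := by
          apply mul_le_of_le_one_right hsN0; exact le_of_lt hsi1
        apply mul_le_mul_of_nonneg_right this (by linarith)
    _ ≤ 2 * A * (2 + s) := by
        apply mul_le_mul_of_nonneg_right hB3 (by linarith)
    _ ≤ (4 * s + 4) * A := by nlinarith
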